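/- Let (Ω, 𝓕, P) be a probability space, let 𝓖₁ and 𝓖₂ be independent sub-σ-algebras of 𝓕, let 𝓗₁ ⊆ 𝓖₁ and 𝓗₂ ⊆ 𝓖₂ be sub-σ-algebras, and let U and V be bounded real random variables with U measurable with respect to 𝓖₁ and V measurable with respect to 𝓖₂. Then, almost surely, E[UV | σ(𝓗₁ ∪ 𝓗₂)] = E[U | 𝓗₁]·E[V | 𝓗₂]. -/

import Mathlib

open MeasureTheory ProbabilityTheory

/-- Factorization of conditional expectations across independent σ-algebras:
if 𝓖₁ ⊥ 𝓖₂, 𝓗₁ ⊆ 𝓖₁, 𝓗₂ ⊆ 𝓖₂, U is bounded 𝓖₁-measurable and V is bounded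
𝓖₂-measurable, then E[UV | σ(𝓗₁ ∪ 𝓗₂)] = E[U | 𝓗₁]·E[V | 𝓗₂] a.s. -/
theorem condexp_mul_indep_sigma_algebras
    {Ω : Type*} [m0 : MeasurableSpace Ω] (P : Measure Ω) [IsProbabilityMeasure P]
    (g1 g2 h1 h2 : MeasurableSpace Ω)
    (hg1 : g1 ≤ m0) (hg2 : g2 ≤ m0) (hh1 : h1 ≤ g1) (hh2 : h2 ≤ g2)
    (hindep : Indep g1 g2 P)
    (U V : Ω → ℝ)
    (hU : Measurable[g1] U) (hV : Measurable[g2] V)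
    (hUb : ∃ C, ∀ ω, |U ω| ≤ C) (hVb : ∃ C, ∀ ω, |V ω| ≤ C) :
    P[fun ω => U ω * V ω | h1 ⊔ h2]
      =ᵐ[P] fun ω => (P[U | h1]) ω * (P[V | h2]) ω := by
  letI : MeasurableSpace Ω := m0
  obtain ⟨C, hC⟩ := hUb
  obtain ⟨D, hD⟩ := hVb
  have hm : h1 ⊔ h2 ≤ m0 := sup_le (hh1.trans hg1) (hh2.trans hg2)
  have hle1 : h1 ≤ m0 := hh1.trans hg1
  have hle2 : h2 ≤ m0 := hh2.trans hg2
  -- integrability facts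
  have hUm0 : Measurable U := hU.mono hg1 le_rfl
  have hVm0 : Measurable V := hV.mono hg2 le_rfl
  have hUint : Integrable U P := by
    refine ⟨hUm0.aestronglyMeasurable, ?_⟩
    exact HasFiniteIntegral.of_bounded (C := C)
      (Filter.Eventually.of_forall fun ω => (Real.norm_eq_abs _).le.trans (hC ω))
  have hVint : Integrable V P := by
    refine ⟨hVm0.aestronglyMeasurable, ?_⟩
    exact HasFiniteIntegral.of_bounded (C := D)
      (Filter.Eventually.of_forall fun ω => (Real.norm_eq_abs _).le.trans (hD ω))
  have hUVint : Integrable (fun ω => U ω * V ω) P := by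
    refine ⟨(hUm0.mul hVm0).aestronglyMeasurable, ?_⟩
    refine HasFiniteIntegral.of_bounded (C := C * D)
      (Filter.Eventually.of_forall fun ω => ?_)
    rw [Real.norm_eq_abs, abs_mul]
    exact mul_le_mul (hC ω) (hD ω) (abs_nonneg _) ((abs_nonneg _).trans (hC ω))
  have hcondU_bdd : ∀ᵐ ω ∂P, |(P[U | h1]) ω| ≤ (C.toNNReal : ℝ) := by
    refine ae_bdd_condExp_of_ae_bdd (Filter.Eventually.of_forall fun ω => ?_)
    exact (hC ω).trans (Real.le_coe_toNNReal C)
  have hRHSint : Integrable (fun ω => (P[U | h1]) ω * (P[V | h2]) ω) P := by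
    refine Integrable.bdd_mul (c := (C.toNNReal : ℝ)) integrable_condExp
      (stronglyMeasurable_condExp.mono hle1).aestronglyMeasurable ?_
    filter_upwards [hcondU_bdd] with ω h using (Real.norm_eq_abs _).le.trans h
  -- the π-system of intersections
  set π : Set (Set Ω) :=
    {s | ∃ A B, MeasurableSet[h1] A ∧ MeasurableSet[h2] B ∧ s = A ∩ B} with hπ
  have h_eq : (h1 ⊔ h2) = MeasurableSpace.generateFrom π := by
    refine le_antisymm (sup_le ?_ ?_) (MeasurableSpace.generateFrom_le ?_)
    · intro s hs
      exact MeasurableSpace.measurableSet_generateFrom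
        ⟨s, Set.univ, hs, MeasurableSet.univ, (Set.inter_univ s).symm⟩
    · intro s hs
      exact MeasurableSpace.measurableSet_generateFrom
        ⟨Set.univ, s, MeasurableSet.univ, hs, (Set.univ_inter s).symm⟩
    · rintro s ⟨A, B, hA, hB, rfl⟩
      exact MeasurableSet.inter (le_sup_left (α := MeasurableSpace Ω) _ hA)
        (le_sup_right (α := MeasurableSpace Ω) _ hB)
  have h_pi : IsPiSystem π := by
    rintro s ⟨A, B, hA, hB, rfl⟩ t ⟨A', B', hA', hB', rfl⟩ -
    exact ⟨A ∩ A', B ∩ B', hA.inter hA', hB.inter hB',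
      by rw [Set.inter_inter_inter_comm]⟩
  -- basic case on the π-system
  have hbasic : ∀ A B, MeasurableSet[h1] A → MeasurableSet[h2] B →
      ∫ ω in A ∩ B, U ω * V ω ∂P
        = ∫ ω in A ∩ B, (P[U | h1]) ω * (P[V | h2]) ω ∂P := by
    intro A B hA hB
    have hAm0 : MeasurableSet A := hle1 _ hA
    have hBm0 : MeasurableSet B := hle2 _ hB
    have key : ∀ (f g : Ω → ℝ), Measurable[g1] f → Measurable[g2] g →
        Integrable f P → Integrable g P →
        ∫ ω in A ∩ B, f ω * g ω ∂P = (∫ ω in A, f ω ∂P) * ∫ ω in B, g ω ∂P := by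
      intro f g hf hg hfint hgint
      have hif : Measurable[g1] (A.indicator f) := hf.indicator (hh1 _ hA)
      have hig : Measurable[g2] (B.indicator g) := hg.indicator (hh2 _ hB)
      have hindepfun : IndepFun (A.indicator f) (B.indicator g) P := by
        rw [IndepFun_iff_Indep]
        exact indep_of_indep_of_le_left
          (indep_of_indep_of_le_right hindep (measurable_iff_comap_le.1 hig))
          (measurable_iff_comap_le.1 hif)
      have h1' : Integrable (A.indicator f) P := hfint.indicator hAm0
      have h2' : Integrable (B.indicator g) P := hgint.indicator hBm0
      calc ∫ ω in A ∩ B, f ω * g ω ∂P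
          = ∫ ω, (A ∩ B).indicator (fun ω => f ω * g ω) ω ∂P := by
            rw [integral_indicator (hAm0.inter hBm0)]
        _ = ∫ ω, A.indicator f ω * B.indicator g ω ∂P := by
            congr 1; ext ω; exact Set.inter_indicator_mul f g ω
        _ = (∫ ω, A.indicator f ω ∂P) * ∫ ω, B.indicator g ω ∂P :=
            IndepFun.integral_mul_eq_mul_integral hindepfun h1'.aestronglyMeasurable h2'.aestronglyMeasurable
        _ = (∫ ω in A, f ω ∂P) * ∫ ω in B, g ω ∂P := by
            rw [integral_indicator hAm0, integral_indicator hBm0]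
    rw [key U V hU hV hUint hVint,
      key (P[U | h1]) (P[V | h2])
        (stronglyMeasurable_condExp.measurable.mono hh1 le_rfl)
        (stronglyMeasurable_condExp.measurable.mono hh2 le_rfl)
        integrable_condExp integrable_condExp,
      setIntegral_condExp hle1 hUint hA, setIntegral_condExp hle2 hVint hB]
  -- equality of set integrals over all measurable sets of h1 ⊔ h2
  have key : ∀ ⦃s : Set Ω⦄, MeasurableSet[h1 ⊔ h2] s →
      ∫ ω in s, U ω * V ω ∂P
        = ∫ ω in s, (P[U | h1]) ω * (P[V | h2]) ω ∂P := by
    refine MeasurableSpace.induction_on_inter (m := h1 ⊔ h2) h_eq h_pi ?_ ?_ ?_ ?_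
    · simp
    · rintro t ⟨A, B, hA, hB, rfl⟩
      exact hbasic A B hA hB
    · intro t ht hCt
      have htm0 : MeasurableSet t := hm _ ht
      have htot : ∫ ω, U ω * V ω ∂P
          = ∫ ω, (P[U | h1]) ω * (P[V | h2]) ω ∂P := by
        have := hbasic Set.univ Set.univ MeasurableSet.univ MeasurableSet.univ
        simpa [Measure.restrict_univ] using this
      rw [setIntegral_compl htm0 hUVint, setIntegral_compl htm0 hRHSint, htot, hCt]
    · intro f hdisj hfm hCf
      have hfm0 : ∀ i, MeasurableSet (f i) := fun i => hm _ (hfm i)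
      rw [integral_iUnion hfm0 hdisj hUVint.integrableOn,
        integral_iUnion hfm0 hdisj hRHSint.integrableOn]
      exact tsum_congr hCf
  -- conclude by uniqueness of conditional expectation
  haveI : SigmaFinite (P.trim hm) := by
    have : IsFiniteMeasure (P.trim hm) := isFiniteMeasure_trim hm
    infer_instance
  refine (ae_eq_condExp_of_forall_setIntegral_eq hm hUVint
    (fun s _ _ => hRHSint.integrableOn)
    (fun s hs _ => (key hs).symm)
    ((stronglyMeasurable_condExp.mono le_sup_left).mul
      (stronglyMeasurable_condExp.mono le_sup_right)).aestronglyMeasurable).symm
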